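/- Let p be a natural number, let F be the free group on generators γ₁, …, γ_p, let ℂ[F] be its group algebra over ℂ, let ε : ℂ[F] → ℂ be the augmentation homomorphism (the ℂ-algebra map sending every group element to 1), and let I = ker ε be the augmentation ideal. Then there is an isomorphism of graded ℂ-algebras from the free associative algebra ℂ⟨x₁, …, x_p⟩ on p generators, graded by word length, onto the associated graded algebra gr ℂ[F] = ⊕_{n≥0} Iⁿ/Iⁿ⁺¹ of ℂ[F] with respect to the I-adic filtration (with multiplication induced by the multiplication of ℂ[F]), which sends the generator xᵢ to the class of γᵢ − 1 in I/I². -/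

import Mathlib

/-- The group algebra of the free group on `p` generators over `ℂ`. -/
abbrev FreeGroupAlgebra (p : ℕ) : Type := MonoidAlgebra ℂ (FreeGroup (Fin p))

/-- The augmentation homomorphism: the `ℂ`-algebra map sending every group element to `1`. -/
noncomputable def augmentation (p : ℕ) : FreeGroupAlgebra p →ₐ[ℂ] ℂ :=
  MonoidAlgebra.lift ℂ ℂ (FreeGroup (Fin p)) 1

/-- The augmentation ideal `I = ker ε`. -/
noncomputable def augIdeal (p : ℕ) : Ideal (FreeGroupAlgebra p) :=
  RingHom.ker (augmentation p)

/-- The generator `γᵢ` of the free group, viewed in the group algebra. -/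
noncomputable def γ (p : ℕ) (i : Fin p) : FreeGroupAlgebra p :=
  MonoidAlgebra.of ℂ (FreeGroup (Fin p)) (FreeGroup.of i)

theorem γ_sub_one_mem (p : ℕ) (i : Fin p) : γ p i - 1 ∈ augIdeal p := by
  simp [augIdeal, RingHom.mem_ker, γ, map_sub, augmentation, MonoidAlgebra.lift_of]

/-- Powers of the augmentation ideal are closed under right multiplication. -/
theorem augIdeal_pow_mul_right (p : ℕ) (m : ℕ) :
    ∀ x ∈ (augIdeal p) ^ m, ∀ r : FreeGroupAlgebra p, x * r ∈ (augIdeal p) ^ m := by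
  induction m with
  | zero =>
    intro x _ r
    rw [Submodule.pow_zero, Submodule.one_eq_span]
    exact Submodule.mem_span_singleton.mpr ⟨x * r, by simp⟩
  | succ m ih =>
    intro x hx r
    refine Submodule.mul_induction_on
      (hx : x ∈ (augIdeal p) ^ m * augIdeal p) ?_ ?_
    · intro a ha b hb
      have hbr : b * r ∈ augIdeal p := by
        rw [augIdeal, RingHom.mem_ker] at hb ⊢
        rw [map_mul, hb, zero_mul]
      show a * b * r ∈ (augIdeal p) ^ m * augIdeal p
      rw [mul_assoc]
      exact Submodule.mul_mem_mul ha hbr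
    · intro s t hs ht
      show (s + t) * r ∈ (augIdeal p) ^ (m + 1)
      rw [add_mul]
      exact add_mem hs ht

/-- `Iᵐ · Iⁿ ⊆ Iᵐ⁺ⁿ` for the augmentation ideal. -/
theorem augIdeal_pow_mul_mem (p : ℕ) (m n : ℕ) (u v : FreeGroupAlgebra p)
    (hu : u ∈ (augIdeal p) ^ m) (hv : v ∈ (augIdeal p) ^ n) :
    u * v ∈ (augIdeal p) ^ (m + n) := by
  induction n generalizing v with
  | zero => exact augIdeal_pow_mul_right p m u hu v
  | succ n ih =>
    refine Submodule.mul_induction_on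
      (hv : v ∈ (augIdeal p) ^ n * augIdeal p) ?_ ?_
    · intro a ha b hb
      show u * (a * b) ∈ (augIdeal p) ^ (m + n) * augIdeal p
      rw [← mul_assoc]
      exact Submodule.mul_mem_mul (ih a ha) hb
    · intro s t hs ht
      show u * (s + t) ∈ (augIdeal p) ^ (m + (n + 1))
      rw [mul_add]
      exact add_mem hs ht

/-- The degree-`n` piece `Iⁿ/Iⁿ⁺¹` of the associated graded algebra of the `I`-adic
filtration, as a `ℂ`-vector space. -/
noncomputable abbrev grPiece (p n : ℕ) :=
  (Submodule.restrictScalars ℂ ((augIdeal p) ^ n)) ⧸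
    ((Submodule.restrictScalars ℂ ((augIdeal p) ^ (n + 1))).comap
      (Submodule.restrictScalars ℂ ((augIdeal p) ^ n)).subtype)

/-- The span of the generators `x₁, …, x_p` of the free associative algebra
`ℂ⟨x₁, …, x_p⟩`; its `n`-th power is the degree-`n` homogeneous component of the
grading by word length. -/
noncomputable def genSpan (p : ℕ) : Submodule ℂ (FreeAlgebra ℂ (Fin p)) :=
  Submodule.span ℂ (Set.range (FreeAlgebra.ι ℂ))



namespace Magnus

/-- Noncommutative power series on `p` letters over `ℂ`, as coefficient functions. -/
def PS (p : ℕ) : Type := List (Fin p) → ℂ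

namespace PS

variable {p : ℕ}

noncomputable instance : AddCommGroup (PS p) := inferInstanceAs (AddCommGroup (List (Fin p) → ℂ))
noncomputable instance : Module ℂ (PS p) := inferInstanceAs (Module ℂ (List (Fin p) → ℂ))

noncomputable instance : Mul (PS p) :=
  ⟨fun f g w => ∑ k ∈ Finset.range (w.length + 1), f (w.take k) * g (w.drop k)⟩
noncomputable instance : One (PS p) := ⟨fun w => if w = [] then 1 else 0⟩

protected theorem ext {f g : PS p} (h : ∀ w, f w = g w) : f = g := funext h

theorem mul_apply' (f g : PS p) (w : List (Fin p)) :
    (f * g) w = ∑ k ∈ Finset.range (w.length + 1), f (w.take k) * g (w.drop k) := rfl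

theorem one_apply' (w : List (Fin p)) : (1 : PS p) w = if w = [] then 1 else 0 := rfl

theorem add_apply' (f g : PS p) (w : List (Fin p)) : (f + g) w = f w + g w := rfl
theorem zero_apply' (w : List (Fin p)) : (0 : PS p) w = 0 := rfl
theorem smul_apply' (c : ℂ) (f : PS p) (w : List (Fin p)) : (c • f) w = c * f w := rfl

protected theorem mul_assoc (f g h : PS p) : f * g * h = f * (g * h) := by
  apply PS.ext
  intro w
  rw [mul_apply', mul_apply']
  have h1 : ∀ k ∈ Finset.range (w.length + 1),
      (f * g) (w.take k) * h (w.drop k)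
        = ∑ j ∈ Finset.range (k + 1),
            f (w.take j) * (g ((w.drop j).take (k - j)) * h (w.drop k)) := by
    intro k hk
    rw [Finset.mem_range, Nat.lt_succ_iff] at hk
    rw [mul_apply', Finset.sum_mul]
    apply Finset.sum_congr
    · rw [List.length_take, Nat.min_eq_left hk]
    · intro j hj
      rw [Finset.mem_range, Nat.lt_succ_iff] at hj
      rw [List.take_take, Nat.min_eq_left hj, List.drop_take, mul_assoc]
  have h2 : ∀ j ∈ Finset.range (w.length + 1),
      f (w.take j) * (g * h) (w.drop j)
        = ∑ m ∈ Finset.range (w.length - j + 1),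
            f (w.take j) * (g ((w.drop j).take m) * h (w.drop (j + m))) := by
    intro j hj
    rw [Finset.mem_range, Nat.lt_succ_iff] at hj
    rw [mul_apply', Finset.mul_sum, List.length_drop]
    refine Finset.sum_congr rfl fun m hm => ?_
    rw [List.drop_drop]
  rw [Finset.sum_congr rfl h1, Finset.sum_congr rfl h2, Finset.sum_sigma', Finset.sum_sigma']
  refine Finset.sum_nbij' (fun x => ⟨x.2, x.1 - x.2⟩) (fun x => ⟨x.1 + x.2, x.1⟩) ?_ ?_ ?_ ?_ ?_
  · rintro ⟨k, j⟩ h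
    simp only [Finset.mem_sigma, Finset.mem_range, Nat.lt_succ_iff] at h ⊢
    omega
  · rintro ⟨j, m⟩ h
    simp only [Finset.mem_sigma, Finset.mem_range, Nat.lt_succ_iff] at h ⊢
    omega
  · rintro ⟨k, j⟩ h
    simp only [Finset.mem_sigma, Finset.mem_range, Nat.lt_succ_iff] at h
    simp only [Sigma.mk.inj_iff, heq_eq_eq, and_true, true_and]
    omega
  · rintro ⟨j, m⟩ h
    simp only [Finset.mem_sigma, Finset.mem_range, Nat.lt_succ_iff] at h
    simp only [Sigma.mk.inj_iff, heq_eq_eq, and_true, true_and]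
    omega
  · rintro ⟨k, j⟩ h
    simp only [Finset.mem_sigma, Finset.mem_range, Nat.lt_succ_iff] at h
    have : j + (k - j) = k := by omega
    simp [this]

protected theorem one_mul (f : PS p) : 1 * f = f := by
  apply PS.ext
  intro w
  rw [mul_apply']
  rw [Finset.sum_eq_single 0]
  · simp [one_apply']
  · intro k hk hk0
    rw [Finset.mem_range, Nat.lt_succ_iff] at hk
    have : w.take k ≠ [] := by
      intro h
      have := congrArg List.length h
      simp only [List.length_take, List.length_nil] at this
      omega
    rw [one_apply', if_neg this, zero_mul]
  · intro h
    exact absurd (Finset.mem_range.mpr (Nat.succ_pos _)) h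

protected theorem mul_one (f : PS p) : f * 1 = f := by
  apply PS.ext
  intro w
  rw [mul_apply']
  rw [Finset.sum_eq_single w.length]
  · simp [one_apply']
  · intro k hk hk0
    rw [Finset.mem_range, Nat.lt_succ_iff] at hk
    have : w.drop k ≠ [] := by
      intro h
      have := congrArg List.length h
      simp only [List.length_drop, List.length_nil] at this
      omega
    rw [one_apply', if_neg this, mul_zero]
  · intro h
    exact absurd (Finset.mem_range.mpr (Nat.lt_succ_self _)) h

protected theorem left_distrib (f g h : PS p) : f * (g + h) = f * g + f * h := by
  apply PS.ext
  intro w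
  rw [add_apply', mul_apply', mul_apply', mul_apply', ← Finset.sum_add_distrib]
  exact Finset.sum_congr rfl fun k _ => by rw [add_apply', mul_add]

protected theorem right_distrib (f g h : PS p) : (f + g) * h = f * h + g * h := by
  apply PS.ext
  intro w
  rw [add_apply', mul_apply', mul_apply', mul_apply', ← Finset.sum_add_distrib]
  exact Finset.sum_congr rfl fun k _ => by rw [add_apply', add_mul]

protected theorem zero_mul' (f : PS p) : 0 * f = 0 := by
  apply PS.ext; intro w
  rw [mul_apply']
  exact Finset.sum_eq_zero fun k _ => by rw [zero_apply', zero_mul]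

protected theorem mul_zero' (f : PS p) : f * 0 = 0 := by
  apply PS.ext; intro w
  rw [mul_apply']
  exact Finset.sum_eq_zero fun k _ => by rw [zero_apply', mul_zero]

noncomputable instance : Ring (PS p) :=
  { (inferInstance : AddCommGroup (PS p)) with
    mul := (· * ·)
    one := 1
    mul_assoc := PS.mul_assoc
    one_mul := PS.one_mul
    mul_one := PS.mul_one
    left_distrib := PS.left_distrib
    right_distrib := PS.right_distrib
    zero_mul := PS.zero_mul'
    mul_zero := PS.mul_zero' }

noncomputable instance : Algebra ℂ (PS p) :=
  Algebra.ofModule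
    (fun c f g => by
      apply PS.ext; intro w
      rw [smul_apply', mul_apply', mul_apply', Finset.mul_sum]
      exact Finset.sum_congr rfl fun k _ => by rw [smul_apply', mul_assoc])
    (fun f c g => by
      apply PS.ext; intro w
      rw [smul_apply', mul_apply', mul_apply', Finset.mul_sum]
      exact Finset.sum_congr rfl fun k _ => by
        rw [smul_apply']; ring)

-- restated apply lemmas, for the ring operations
theorem mul_apply (f g : PS p) (w : List (Fin p)) :
    (f * g) w = ∑ k ∈ Finset.range (w.length + 1), f (w.take k) * g (w.drop k) := rfl
theorem one_apply (w : List (Fin p)) : (1 : PS p) w = if w = [] then 1 else 0 := rfl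
theorem add_apply (f g : PS p) (w : List (Fin p)) : (f + g) w = f w + g w := rfl
theorem zero_apply (w : List (Fin p)) : (0 : PS p) w = 0 := rfl
theorem smul_apply (c : ℂ) (f : PS p) (w : List (Fin p)) : (c • f) w = c * f w := rfl

end PS

end Magnus
namespace Magnus
namespace PS

variable {p : ℕ}

/-- The monomial indicator series. -/
noncomputable def delta (u : List (Fin p)) : PS p := fun w => if w = u then 1 else 0

theorem delta_apply (u w : List (Fin p)) : delta u w = if w = u then 1 else 0 := rfl

theorem delta_nil : (delta [] : PS p) = 1 := rfl

theorem delta_mul_apply (u : List (Fin p)) (f : PS p) (w : List (Fin p)) :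
    (delta u * f) w = if w.take u.length = u then f (w.drop u.length) else 0 := by
  rw [mul_apply]
  rcases le_or_gt u.length w.length with h | h
  · rw [Finset.sum_eq_single u.length]
    · rw [delta_apply]
      split_ifs with h1 <;> simp
    · intro k hk hku
      rw [Finset.mem_range, Nat.lt_succ_iff] at hk
      rw [delta_apply, if_neg, zero_mul]
      intro h1
      have := congrArg List.length h1
      rw [List.length_take] at this
      omega
    · intro hmem
      exact absurd (Finset.mem_range.mpr (by omega)) hmem
  · rw [Finset.sum_eq_zero, if_neg]
    · intro h1
      have := congrArg List.length h1
      rw [List.length_take] at this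
      omega
    · intro k hk
      rw [Finset.mem_range, Nat.lt_succ_iff] at hk
      rw [delta_apply, if_neg, zero_mul]
      intro h1
      have := congrArg List.length h1
      rw [List.length_take] at this
      omega

theorem mul_delta_apply (f : PS p) (u : List (Fin p)) (w : List (Fin p)) :
    (f * delta u) w =
      if w.drop (w.length - u.length) = u then f (w.take (w.length - u.length)) else 0 := by
  rw [mul_apply]
  rcases le_or_gt u.length w.length with h | h
  · rw [Finset.sum_eq_single (w.length - u.length)]
    · rw [delta_apply]
      split_ifs with h1 <;> simp
    · intro k hk hku
      rw [Finset.mem_range, Nat.lt_succ_iff] at hk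
      rw [delta_apply, if_neg, mul_zero]
      intro h1
      have := congrArg List.length h1
      rw [List.length_drop] at this
      omega
    · intro hmem
      exact absurd (Finset.mem_range.mpr (by omega)) hmem
  · rw [Finset.sum_eq_zero, if_neg]
    · intro h1
      have := congrArg List.length h1
      rw [List.length_drop] at this
      omega
    · intro k hk
      rw [Finset.mem_range, Nat.lt_succ_iff] at hk
      rw [delta_apply, if_neg, mul_zero]
      intro h1
      have := congrArg List.length h1
      rw [List.length_drop] at this
      omega

theorem delta_mul (u v : List (Fin p)) : (delta u : PS p) * delta v = delta (u ++ v) := by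
  apply PS.ext
  intro w
  rw [delta_mul_apply, delta_apply, delta_apply]
  rcases eq_or_ne w (u ++ v) with rfl | h
  · rw [if_pos rfl, List.take_left, List.drop_left, if_pos rfl, if_pos rfl]
  · rw [if_neg h]
    rcases eq_or_ne (w.take u.length) u with h1 | h1
    · rw [if_pos h1, if_neg]
      intro h2
      exact h (by rw [← h1, ← h2, List.take_append_drop])
    · rw [if_neg h1]

/-- Evaluation at the empty word, as a `ℂ`-algebra homomorphism. -/
noncomputable def ev0 (p : ℕ) : PS p →ₐ[ℂ] ℂ where
  toFun f := f []
  map_one' := rfl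
  map_mul' f g := by
    show (f * g) [] = f [] * g []
    rw [mul_apply]
    simp
  map_zero' := rfl
  map_add' f g := rfl
  commutes' c := by
    show (c • (1 : PS p)) [] = c
    rw [smul_apply, one_apply, if_pos rfl, mul_one]

theorem ev0_apply (f : PS p) : ev0 p f = f [] := rfl

/-- The filtration by order: series whose coefficients in degree `< m` vanish. -/
noncomputable def Fm (p m : ℕ) : Submodule ℂ (PS p) where
  carrier := {f | ∀ w : List (Fin p), w.length < m → f w = 0}
  add_mem' := fun hf hg w hw => by rw [add_apply, hf w hw, hg w hw, add_zero]
  zero_mem' := fun w hw => rfl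
  smul_mem' := fun c f hf w hw => by rw [smul_apply, hf w hw, mul_zero]

theorem mem_Fm {m : ℕ} {f : PS p} :
    f ∈ Fm p m ↔ ∀ w : List (Fin p), w.length < m → f w = 0 := Iff.rfl

theorem mul_mem_Fm {a b : ℕ} {f g : PS p} (hf : f ∈ Fm p a) (hg : g ∈ Fm p b) :
    f * g ∈ Fm p (a + b) := by
  intro w hw
  rw [mul_apply]
  apply Finset.sum_eq_zero
  intro k hk
  rw [Finset.mem_range, Nat.lt_succ_iff] at hk
  rcases lt_or_ge k a with h | h
  · rw [hf _ (by rw [List.length_take]; omega), zero_mul]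
  · rw [hg _ (by rw [List.length_drop]; omega), mul_zero]

theorem mem_Fm_one {f : PS p} (h : f [] = 0) : f ∈ Fm p 1 := by
  intro w hw
  have : w = [] := List.length_eq_zero_iff.mp (by omega)
  rw [this, h]

/-- The geometric series `∑ (-xᵢ)^k`, the inverse of `1 + xᵢ`. -/
noncomputable def geom (i : Fin p) : PS p :=
  fun w => if ∀ a ∈ w, a = i then (-1 : ℂ) ^ w.length else 0

theorem geom_apply (i : Fin p) (w : List (Fin p)) :
    geom i w = if ∀ a ∈ w, a = i then (-1 : ℂ) ^ w.length else 0 := rfl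

theorem forall_mem_cons_self {a : Fin p} {t : List (Fin p)} (h : ∀ x ∈ t, x = a) :
    ∀ x ∈ a :: t, x = a := by
  intro x hx
  rcases List.mem_cons.mp hx with rfl | hx'
  · rfl
  · exact h x hx'

theorem one_add_delta_mul_geom (i : Fin p) :
    ((1 : PS p) + delta [i]) * geom i = 1 := by
  apply PS.ext
  intro w
  rw [add_mul, PS.one_mul, add_apply, delta_mul_apply]
  cases w with
  | nil =>
    rw [geom_apply, if_pos (by simp),
      if_neg (show ¬(List.take [i].length ([] : List (Fin p)) = [i]) by simp),
      one_apply, if_pos rfl]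
    simp
  | cons a t =>
    rw [one_apply, if_neg (List.cons_ne_nil a t)]
    simp only [List.length_singleton, List.take_succ_cons, List.take_zero,
      List.drop_succ_cons, List.drop_zero]
    rcases eq_or_ne a i with rfl | ha
    · rw [if_pos rfl, geom_apply, geom_apply]
      rcases Classical.em (∀ x ∈ t, x = a) with h | h
      · rw [if_pos (forall_mem_cons_self h), if_pos h, List.length_cons, pow_succ]
        ring
      · rw [if_neg (fun hall => h fun x hx => hall x (List.mem_cons_of_mem a hx)),
          if_neg h, add_zero]
    · rw [if_neg (show ¬([a] = [i]) by simp [ha]), geom_apply,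
        if_neg (fun hall => ha (hall a (List.mem_cons_self))), add_zero]

theorem geom_mul_one_add_delta (i : Fin p) :
    geom i * ((1 : PS p) + delta [i]) = 1 := by
  apply PS.ext
  intro w
  rcases List.eq_nil_or_concat w with rfl | ⟨t, a, rfl⟩
  · rw [mul_add, PS.mul_one, add_apply, mul_delta_apply, geom_apply, if_pos (by simp),
      if_neg (show ¬(List.drop (List.length ([] : List (Fin p)) - [i].length) [] = [i]) by simp),
      one_apply, if_pos rfl]
    simp
  · rw [List.concat_eq_append, mul_add, PS.mul_one, add_apply, mul_delta_apply]
    have hdl : (t ++ [a]).length - [i].length = t.length := by simp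
    rw [hdl, List.drop_left, List.take_left, one_apply,
      if_neg (show ¬(t ++ [a] = []) by simp)]
    rcases eq_or_ne a i with rfl | ha
    · rw [if_pos rfl, geom_apply, geom_apply]
      rcases Classical.em (∀ x ∈ t, x = a) with h | h
      · rw [if_pos (List.forall_mem_append.mpr ⟨h, by simp⟩), if_pos h]
        simp only [List.length_append, List.length_singleton, pow_succ]
        ring
      · rw [if_neg (fun hall => h fun x hx => hall x (List.mem_append_left _ hx)),
          if_neg h, add_zero]
    · rw [if_neg (show ¬([a] = [i]) by simp [ha]), geom_apply,
        if_neg (fun hall => ha (hall a (List.mem_append_right _ (List.mem_singleton_self a)))),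
        add_zero]

/-- The Magnus unit `1 + xᵢ`. -/
noncomputable def magnusUnit (p : ℕ) (i : Fin p) : (PS p)ˣ where
  val := 1 + delta [i]
  inv := geom i
  val_inv := one_add_delta_mul_geom i
  inv_val := geom_mul_one_add_delta i

end PS
end Magnus
namespace Magnus

open PS

variable {p : ℕ}

/-! ### The Magnus homomorphism -/

/-- The Magnus monoid homomorphism into power series. -/
noncomputable def magnusHom (p : ℕ) : FreeGroup (Fin p) →* PS p :=
  (Units.coeHom (PS p)).comp (FreeGroup.lift (PS.magnusUnit p))

theorem magnusHom_of (p : ℕ) (i : Fin p) :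
    magnusHom p (FreeGroup.of i) = 1 + PS.delta [i] := by
  simp only [magnusHom, MonoidHom.comp_apply, FreeGroup.lift_apply_of]
  rfl

/-- The Magnus algebra homomorphism. -/
noncomputable def muHom (p : ℕ) : FreeGroupAlgebra p →ₐ[ℂ] PS p :=
  MonoidAlgebra.lift ℂ (PS p) (FreeGroup (Fin p)) (magnusHom p)

theorem muHom_of (p : ℕ) (g : FreeGroup (Fin p)) :
    muHom p (MonoidAlgebra.of ℂ (FreeGroup (Fin p)) g) = magnusHom p g :=
  MonoidAlgebra.lift_of _ _

theorem ev0_magnusHom (p : ℕ) (g : FreeGroup (Fin p)) :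
    PS.ev0 p (magnusHom p g) = 1 := by
  have key : (Units.map ((PS.ev0 p).toRingHom.toMonoidHom)).comp
      (FreeGroup.lift (PS.magnusUnit p)) = 1 := by
    apply FreeGroup.ext_hom
    intro i
    ext
    rw [MonoidHom.comp_apply, FreeGroup.lift_apply_of, MonoidHom.one_apply, Units.coe_map,
      Units.val_one]
    show PS.ev0 p ((PS.magnusUnit p i : PS p)) = 1
    rw [show ((PS.magnusUnit p i : PS p)) = 1 + PS.delta [i] from rfl, map_add, map_one,
      PS.ev0_apply, PS.delta_apply, if_neg (by simp), add_zero]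
  have h2 := DFunLike.congr_fun key g
  simp only [MonoidHom.comp_apply, MonoidHom.one_apply] at h2
  have h3 := congrArg (Units.val) h2
  rw [Units.coe_map] at h3
  exact h3

theorem augmentation_of (p : ℕ) (g : FreeGroup (Fin p)) :
    augmentation p (MonoidAlgebra.of ℂ (FreeGroup (Fin p)) g) = 1 := by
  rw [augmentation, MonoidAlgebra.lift_of]
  rfl

theorem of_sub_one_mem_augIdeal (p : ℕ) (g : FreeGroup (Fin p)) :
    MonoidAlgebra.of ℂ (FreeGroup (Fin p)) g - 1 ∈ augIdeal p := by
  rw [augIdeal, RingHom.mem_ker, map_sub, map_one, augmentation_of, sub_self]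

theorem ev0_muHom (p : ℕ) (x : FreeGroupAlgebra p) :
    PS.ev0 p (muHom p x) = augmentation p x := by
  have : (PS.ev0 p).comp (muHom p) = augmentation p := by
    apply MonoidAlgebra.algHom_ext
    intro g
    show PS.ev0 p (muHom p (MonoidAlgebra.of ℂ (FreeGroup (Fin p)) g))
        = augmentation p (MonoidAlgebra.of ℂ (FreeGroup (Fin p)) g)
    rw [muHom_of, augmentation_of, ev0_magnusHom]
    exact Subsingleton.elim _ _
  exact DFunLike.congr_fun this x

theorem muHom_mem_Fm (p : ℕ) : ∀ (m : ℕ) (x : FreeGroupAlgebra p),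
    x ∈ (augIdeal p) ^ m → muHom p x ∈ PS.Fm p m := by
  intro m
  induction m with
  | zero => intro x _ w hw; omega
  | succ m ih =>
    intro x hx
    refine Submodule.mul_induction_on (hx : x ∈ (augIdeal p) ^ m * augIdeal p) ?_ ?_
    · intro a ha b hb
      rw [map_mul]
      refine PS.mul_mem_Fm (ih a ha) (PS.mem_Fm_one ?_)
      show PS.ev0 p (muHom p b) = 0
      rw [ev0_muHom]
      exact RingHom.mem_ker.mp hb
    · intro a b ha hb
      rw [map_add]
      exact add_mem ha hb

/-! ### The lift of the free algebra sending `xᵢ` to `γᵢ - 1` -/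

/-- The algebra homomorphism `ℂ⟨x₁,…,x_p⟩ → ℂ[F]`, `xᵢ ↦ γᵢ - 1`. -/
noncomputable def theta (p : ℕ) : FreeAlgebra ℂ (Fin p) →ₐ[ℂ] FreeGroupAlgebra p :=
  FreeAlgebra.lift ℂ (fun i => γ p i - 1)

theorem theta_ι (p : ℕ) (i : Fin p) : theta p (FreeAlgebra.ι ℂ i) = γ p i - 1 :=
  FreeAlgebra.lift_ι_apply _ _

theorem theta_genSpan_mem {a : FreeAlgebra ℂ (Fin p)} (ha : a ∈ genSpan p) :
    theta p a ∈ augIdeal p := by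
  have : genSpan p ≤ Submodule.comap (theta p).toLinearMap
      (Submodule.restrictScalars ℂ (augIdeal p)) := by
    rw [genSpan, Submodule.span_le]
    rintro _ ⟨i, rfl⟩
    simp only [Set.mem_preimage, SetLike.mem_coe, Submodule.comap_coe, AlgHom.toLinearMap_apply,
      Submodule.restrictScalars_mem]
    rw [theta_ι]
    exact γ_sub_one_mem p i
  exact this ha

theorem theta_mem_pow : ∀ (n : ℕ) (a : FreeAlgebra ℂ (Fin p)), a ∈ genSpan p ^ n →
    theta p a ∈ (augIdeal p) ^ n := by
  intro n
  induction n with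
  | zero =>
    intro a _
    rw [Submodule.pow_zero, Submodule.one_eq_span]
    exact Submodule.mem_span_singleton.mpr ⟨theta p a, by simp⟩
  | succ n ih =>
    intro a ha
    rw [pow_succ] at ha
    refine Submodule.mul_induction_on ha ?_ ?_
    · intro x hx y hy
      rw [map_mul]
      exact (Submodule.mul_mem_mul (ih x hx) (theta_genSpan_mem hy) :
        _ ∈ (augIdeal p) ^ n * augIdeal p)
    · intro x y hx hy
      rw [map_add]
      exact add_mem hx hy

/-! ### Monomials and the monoid-algebra picture -/

/-- The monomial `x_{i₁} ⋯ x_{iₙ}` in the free algebra. -/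
noncomputable def mono (p : ℕ) (l : List (Fin p)) : FreeAlgebra ℂ (Fin p) :=
  (l.map (FreeAlgebra.ι ℂ)).prod

theorem mono_nil : mono p [] = 1 := rfl

theorem mono_cons (a : Fin p) (l : List (Fin p)) :
    mono p (a :: l) = FreeAlgebra.ι ℂ a * mono p l := by
  rw [mono, List.map_cons, List.prod_cons, mono]

theorem mono_mem (l : List (Fin p)) : mono p l ∈ genSpan p ^ l.length := by
  induction l with
  | nil => rw [mono_nil, List.length_nil, pow_zero]; exact Submodule.one_le.mp le_rfl
  | cons a t ih =>
    rw [mono_cons, List.length_cons, pow_succ']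
    exact Submodule.mul_mem_mul (Submodule.subset_span ⟨a, rfl⟩) ih

noncomputable abbrev Emap (p : ℕ) :
    FreeAlgebra ℂ (Fin p) ≃ₐ[ℂ] MonoidAlgebra ℂ (FreeMonoid (Fin p)) :=
  FreeAlgebra.equivMonoidAlgebraFreeMonoid

theorem Emap_ι (i : Fin p) :
    Emap p (FreeAlgebra.ι ℂ i) = MonoidAlgebra.single (FreeMonoid.of i) 1 := by
  simp [Emap, FreeAlgebra.equivMonoidAlgebraFreeMonoid, MonoidAlgebra.of_apply]

theorem Emap_mono (l : List (Fin p)) :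
    Emap p (mono p l) = MonoidAlgebra.single (FreeMonoid.ofList l) 1 := by
  induction l with
  | nil =>
    rw [mono_nil, map_one, show FreeMonoid.ofList ([] : List (Fin p)) = 1 from rfl,
      ← MonoidAlgebra.one_def]
  | cons a t ih =>
    rw [mono_cons, map_mul, Emap_ι, ih, MonoidAlgebra.single_mul_single, one_mul,
      FreeMonoid.ofList_cons]

theorem muHom_theta_mono (l : List (Fin p)) :
    muHom p (theta p (mono p l)) = PS.delta l := by
  induction l with
  | nil => rw [mono_nil, map_one, map_one, PS.delta_nil]
  | cons a t ih =>
    have hγ : muHom p (γ p a - 1) = PS.delta [a] := by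
      rw [map_sub, map_one, γ, muHom_of, magnusHom_of, add_sub_cancel_left]
    rw [mono_cons, map_mul, map_mul, theta_ι, hγ, ih, PS.delta_mul, List.singleton_append]

/-- Coefficient extraction, as a linear map to power series. -/
noncomputable def kappa (p : ℕ) : MonoidAlgebra ℂ (FreeMonoid (Fin p)) →ₗ[ℂ] PS p where
  toFun f := fun w => f.coeff (FreeMonoid.ofList w)
  map_add' f g := by
    apply PS.ext
    intro w
    exact Finsupp.add_apply f.coeff g.coeff _
  map_smul' c f := by
    apply PS.ext
    intro w
    rw [RingHom.id_apply]
    exact Finsupp.smul_apply c f.coeff _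

theorem kappa_apply (f : MonoidAlgebra ℂ (FreeMonoid (Fin p))) (w : List (Fin p)) :
    kappa p f w = f.coeff (FreeMonoid.ofList w) := rfl

theorem basisFreeMonoid_apply (u : FreeMonoid (Fin p)) :
    FreeAlgebra.basisFreeMonoid ℂ (Fin p) u = mono p (FreeMonoid.toList u) := by
  rw [FreeAlgebra.basisFreeMonoid, Module.Basis.map_apply, Finsupp.coe_basisSingleOne]
  apply (Emap p).injective
  rw [Emap_mono, FreeMonoid.ofList_toList]
  exact (Emap p).apply_symm_apply _

theorem muHom_theta_eq_kappa_Emap (a : FreeAlgebra ℂ (Fin p)) :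
    muHom p (theta p a) = kappa p (Emap p a) := by
  have : ((muHom p).comp (theta p)).toLinearMap
      = (kappa p).comp (Emap p).toLinearMap := by
    apply Module.Basis.ext (FreeAlgebra.basisFreeMonoid ℂ (Fin p))
    intro u
    rw [basisFreeMonoid_apply]
    show muHom p (theta p (mono p (FreeMonoid.toList u)))
        = kappa p (Emap p (mono p (FreeMonoid.toList u)))
    rw [muHom_theta_mono, Emap_mono, FreeMonoid.ofList_toList]
    apply PS.ext
    intro w
    classical
    rw [kappa_apply, PS.delta_apply, MonoidAlgebra.coeff_single, Finsupp.single_apply]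
    by_cases hw : u = FreeMonoid.ofList w
    · rw [if_pos hw, if_pos (by rw [hw, FreeMonoid.toList_ofList])]
    · rw [if_neg hw, if_neg (fun h => hw (by rw [h, FreeMonoid.ofList_toList]))]
  exact DFunLike.congr_fun this a

/-! ### The word-length grading on the monoid algebra -/

/-- Homogeneous elements of word-length `N` in the monoid algebra. -/
noncomputable def Hdeg (p N : ℕ) : Submodule ℂ (MonoidAlgebra ℂ (FreeMonoid (Fin p))) where
  carrier := {f | ∀ u ∈ f.coeff.support, (FreeMonoid.toList u).length = N}
  add_mem' := fun {f g} hf hg u hu => by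
    classical
    rcases Finset.mem_union.mp (Finsupp.support_add hu) with h | h
    · exact hf u h
    · exact hg u h
  zero_mem' := fun u hu => by simp at hu
  smul_mem' := fun c f hf u hu => hf u (Finsupp.support_smul hu)

theorem mem_Hdeg {N : ℕ} {f : MonoidAlgebra ℂ (FreeMonoid (Fin p))} :
    f ∈ Hdeg p N ↔ ∀ u ∈ f.coeff.support, (FreeMonoid.toList u).length = N := Iff.rfl

theorem Emap_mem_Hdeg : ∀ (N : ℕ) (a : FreeAlgebra ℂ (Fin p)), a ∈ genSpan p ^ N →
    Emap p a ∈ Hdeg p N := by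
  intro N
  induction N with
  | zero =>
    intro a ha
    rw [pow_zero] at ha
    obtain ⟨c, rfl⟩ := Submodule.mem_one.mp ha
    rw [AlgEquiv.commutes, mem_Hdeg]
    intro u hu
    have : u ∈ ({1} : Finset (FreeMonoid (Fin p))) := by
      have : (algebraMap ℂ (MonoidAlgebra ℂ (FreeMonoid (Fin p)))) c
          = MonoidAlgebra.single 1 c := by
        rw [Algebra.algebraMap_eq_smul_one, MonoidAlgebra.one_def, MonoidAlgebra.smul_single,
          smul_eq_mul, mul_one]
      rw [this] at hu
      exact Finsupp.support_single_subset hu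
    rw [Finset.mem_singleton] at this
    subst this
    rfl
  | succ N ih =>
    intro a ha
    rw [pow_succ] at ha
    refine Submodule.mul_induction_on ha ?_ ?_
    · intro x hx y hy
      classical
      rw [map_mul, mem_Hdeg]
      intro u hu
      have hy1 : Emap p y ∈ Hdeg p 1 := by
        have : genSpan p ≤ Submodule.comap (Emap p).toLinearMap (Hdeg p 1) := by
          rw [genSpan, Submodule.span_le]
          rintro _ ⟨i, rfl⟩
          simp only [Set.mem_preimage, SetLike.mem_coe, Submodule.comap_coe,
            AlgEquiv.toLinearMap_apply]
          rw [Emap_ι, mem_Hdeg]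
          intro u hu
          have := Finsupp.support_single_subset hu
          rw [Finset.mem_singleton] at this
          subst this
          rw [FreeMonoid.toList_of]
          rfl
        exact this hy
      have := MonoidAlgebra.support_coeff_mul_subset (Emap p x) (Emap p y) hu
      rw [Finset.mem_mul] at this
      obtain ⟨v, hv, z, hz, rfl⟩ := this
      rw [FreeMonoid.toList_mul, List.length_append, mem_Hdeg.mp (ih x hx) v hv, mem_Hdeg.mp hy1 z hz]
    · intro x y hx hy
      rw [map_add]
      exact add_mem hx hy

end Magnus
namespace Magnus

variable {p : ℕ}

theorem mul_mem_augIdeal_sq {a b : FreeGroupAlgebra p}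
    (ha : a ∈ augIdeal p) (hb : b ∈ augIdeal p) : a * b ∈ (augIdeal p) ^ 2 :=
  augIdeal_pow_mul_mem p 1 1 a b (by rw [Submodule.pow_one]; exact ha)
    (by rw [Submodule.pow_one]; exact hb)

theorem augIdeal_pow_succ_le (p m : ℕ) : (augIdeal p) ^ (m + 1) ≤ (augIdeal p) ^ m :=
  fun x hx =>
    Submodule.mul_induction_on (hx : x ∈ (augIdeal p) ^ m * augIdeal p)
      (fun a ha b _ => augIdeal_pow_mul_right p m a ha b)
      (fun a b ha hb => add_mem ha hb)

theorem of_sub_one_mem_span (g : FreeGroup (Fin p)) :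
    MonoidAlgebra.of ℂ (FreeGroup (Fin p)) g - 1 ∈
      Submodule.map (theta p).toLinearMap (genSpan p) ⊔
        Submodule.restrictScalars ℂ ((augIdeal p) ^ 2) := by
  refine FreeGroup.induction_on g ?_ ?_ ?_ ?_
  · rw [map_one, sub_self]
    exact zero_mem _
  · intro x
    apply Submodule.mem_sup_left
    refine Submodule.mem_map.mpr ⟨FreeAlgebra.ι ℂ x, Submodule.subset_span ⟨x, rfl⟩, ?_⟩
    rw [AlgHom.toLinearMap_apply, theta_ι]
    rfl
  · intro x hx
    set u := MonoidAlgebra.of ℂ (FreeGroup (Fin p)) (FreeGroup.of x) with hu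
    set v := MonoidAlgebra.of ℂ (FreeGroup (Fin p)) (FreeGroup.of x)⁻¹ with hv
    have huv : v * u = 1 := by
      rw [hu, hv, ← map_mul, inv_mul_cancel, map_one]
    have h2 : -((v - 1) * (u - 1)) - (u - 1) = v - v * u := by noncomm_ring
    have key : v - 1 = -((v - 1) * (u - 1)) - (u - 1) := by rw [h2, huv]
    rw [key]
    refine sub_mem (neg_mem ?_) hx
    apply Submodule.mem_sup_right
    rw [Submodule.restrictScalars_mem]
    exact mul_mem_augIdeal_sq (of_sub_one_mem_augIdeal p _) (of_sub_one_mem_augIdeal p _)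
  · intro x y hx hy
    have key : MonoidAlgebra.of ℂ (FreeGroup (Fin p)) (x * y) - 1
        = (MonoidAlgebra.of ℂ (FreeGroup (Fin p)) x - 1)
            * (MonoidAlgebra.of ℂ (FreeGroup (Fin p)) y - 1)
          + ((MonoidAlgebra.of ℂ (FreeGroup (Fin p)) x - 1)
          + (MonoidAlgebra.of ℂ (FreeGroup (Fin p)) y - 1)) := by
      rw [map_mul]
      noncomm_ring
    rw [key]
    refine add_mem ?_ (add_mem hx hy)
    apply Submodule.mem_sup_right
    rw [Submodule.restrictScalars_mem]
    exact mul_mem_augIdeal_sq (of_sub_one_mem_augIdeal p _) (of_sub_one_mem_augIdeal p _)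

theorem augmentation_eq_sum (x : FreeGroupAlgebra p) :
    augmentation p x = ∑ g ∈ x.coeff.support, x.coeff g := by
  rw [augmentation, MonoidAlgebra.lift_apply, Finsupp.sum]
  refine Finset.sum_congr rfl fun g _ => ?_
  simp

theorem self_eq_sum (x : FreeGroupAlgebra p) :
    ∑ g ∈ x.coeff.support, x.coeff g • (MonoidAlgebra.of ℂ (FreeGroup (Fin p)) g) = x := by
  conv_rhs => rw [← MonoidAlgebra.sum_coeff_single x]
  rw [Finsupp.sum]
  refine Finset.sum_congr rfl fun g _ => ?_
  rw [MonoidAlgebra.of_apply]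
  rw [MonoidAlgebra.smul_single, smul_eq_mul, mul_one]

theorem augIdeal_le_span {x : FreeGroupAlgebra p} (hx : x ∈ augIdeal p) :
    x ∈ Submodule.map (theta p).toLinearMap (genSpan p) ⊔
      Submodule.restrictScalars ℂ ((augIdeal p) ^ 2) := by
  have hx0 : augmentation p x = 0 := RingHom.mem_ker.mp hx
  have hsum : x = ∑ g ∈ x.coeff.support, x.coeff g • (MonoidAlgebra.of ℂ (FreeGroup (Fin p)) g - 1) := by
    have : ∑ g ∈ x.coeff.support, x.coeff g • (MonoidAlgebra.of ℂ (FreeGroup (Fin p)) g - 1)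
        = (∑ g ∈ x.coeff.support, x.coeff g • (MonoidAlgebra.of ℂ (FreeGroup (Fin p)) g))
          - (∑ g ∈ x.coeff.support, x.coeff g) • (1 : FreeGroupAlgebra p) := by
      rw [Finset.sum_smul, ← Finset.sum_sub_distrib]
      refine Finset.sum_congr rfl fun g _ => ?_
      rw [smul_sub]
    rw [this, self_eq_sum, ← augmentation_eq_sum, hx0, zero_smul, sub_zero]
  rw [hsum]
  exact Submodule.sum_mem _ fun g _ => Submodule.smul_mem _ _ (of_sub_one_mem_span g)

theorem pow_le_span : ∀ (N : ℕ) (x : FreeGroupAlgebra p), x ∈ (augIdeal p) ^ N →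
    x ∈ Submodule.map (theta p).toLinearMap (genSpan p ^ N) ⊔
      Submodule.restrictScalars ℂ ((augIdeal p) ^ (N + 1)) := by
  intro N
  induction N with
  | zero =>
    intro x _
    have key : x = (augmentation p x) • (1 : FreeGroupAlgebra p)
        + (x - (augmentation p x) • 1) := (add_sub_cancel _ _).symm
    rw [key]
    refine add_mem (Submodule.mem_sup_left ?_) (Submodule.mem_sup_right ?_)
    · refine Submodule.mem_map.mpr ⟨algebraMap ℂ _ (augmentation p x), ?_, ?_⟩
      · rw [pow_zero]
        exact Submodule.mem_one.mpr ⟨augmentation p x, rfl⟩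
      · rw [AlgHom.toLinearMap_apply, AlgHom.commutes, Algebra.algebraMap_eq_smul_one]
    · rw [Submodule.restrictScalars_mem, zero_add, Submodule.pow_one, augIdeal, RingHom.mem_ker]
      rw [map_sub, map_smul, map_one, smul_eq_mul, mul_one, sub_self]
  | succ N ih =>
    intro x hx
    refine Submodule.mul_induction_on (hx : x ∈ (augIdeal p) ^ N * augIdeal p) ?_
      (fun a b ha hb => add_mem ha hb)
    intro a ha b hb
    obtain ⟨y, hy, r, hr, hyr⟩ := Submodule.mem_sup.mp (ih a ha)
    rw [Submodule.restrictScalars_mem] at hr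
    obtain ⟨α, hα, hθα⟩ := Submodule.mem_map.mp hy
    rw [AlgHom.toLinearMap_apply] at hθα
    obtain ⟨z, hz, s, hs, hzs⟩ := Submodule.mem_sup.mp (augIdeal_le_span hb)
    rw [Submodule.restrictScalars_mem] at hs
    obtain ⟨β, hβ, hθβ⟩ := Submodule.mem_map.mp hz
    rw [AlgHom.toLinearMap_apply] at hθβ
    have hab : a * b = theta p (α * β)
        + (theta p α * s + (r * theta p β + r * s)) := by
      rw [map_mul, hθα, hθβ, ← hyr, ← hzs]
      noncomm_ring
    rw [hab]
    refine add_mem (Submodule.mem_sup_left ?_) (Submodule.mem_sup_right ?_)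
    · refine Submodule.mem_map.mpr ⟨α * β, ?_, rfl⟩
      rw [pow_succ]
      exact Submodule.mul_mem_mul hα hβ
    · rw [Submodule.restrictScalars_mem]
      refine add_mem ?_ (add_mem ?_ ?_)
      · exact (augIdeal_pow_mul_mem p N 2 _ _ (theta_mem_pow N α hα) hs :
          _ ∈ (augIdeal p) ^ (N + 2))
      · have : theta p β ∈ (augIdeal p) ^ 1 := by
          rw [Submodule.pow_one]; exact theta_genSpan_mem hβ
        exact (augIdeal_pow_mul_mem p (N + 1) 1 _ _ hr this : _ ∈ (augIdeal p) ^ (N + 2))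
      · exact augIdeal_pow_succ_le p (N + 2)
          (augIdeal_pow_mul_mem p (N + 1) 2 _ _ hr hs : _ ∈ (augIdeal p) ^ (N + 3))

/-- The degreewise comparison map. -/
noncomputable def fL (p N : ℕ) : ↥(genSpan p ^ N) →ₗ[ℂ] grPiece p N :=
  (Submodule.mkQ _).comp
    (LinearMap.codRestrict (Submodule.restrictScalars ℂ ((augIdeal p) ^ N))
      ((theta p).toLinearMap.comp (Submodule.subtype _))
      (fun a => theta_mem_pow N a.1 a.2))

theorem fL_apply (N : ℕ) (a : ↥(genSpan p ^ N)) :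
    fL p N a = Submodule.Quotient.mk ⟨theta p a.1, theta_mem_pow N a.1 a.2⟩ := rfl

theorem fL_injective (N : ℕ) : Function.Injective (fL p N) := by
  refine LinearMap.ker_eq_bot.mp (LinearMap.ker_eq_bot'.mpr ?_)
  intro a h0
  rw [fL_apply] at h0
  have h1 : theta p a.1 ∈ (augIdeal p) ^ (N + 1) := by
    have h := (Submodule.Quotient.mk_eq_zero _).mp h0
    rw [Submodule.mem_comap] at h
    simpa using h
  have h2 : muHom p (theta p a.1) ∈ PS.Fm p (N + 1) := muHom_mem_Fm p (N + 1) _ h1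
  rw [muHom_theta_eq_kappa_Emap] at h2
  have h3 : Emap p a.1 = 0 := by
    ext u
    rcases Classical.em (u ∈ (Emap p a.1).coeff.support) with hu | hu
    · have hlen := mem_Hdeg.mp (Emap_mem_Hdeg N a.1 a.2) u hu
      have hz := h2 (FreeMonoid.toList u) (by rw [hlen]; omega)
      rw [kappa_apply, FreeMonoid.ofList_toList] at hz
      rw [hz]
      rfl
    · rw [Finsupp.notMem_support_iff.mp hu]
      rfl
  have h4 : a.1 = 0 := by
    apply (Emap p).injective
    rw [h3, map_zero]
  exact Subtype.ext h4

theorem fL_surjective (N : ℕ) : Function.Surjective (fL p N) := by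
  intro q
  obtain ⟨z, rfl⟩ := Submodule.Quotient.mk_surjective _ q
  have hz : z.1 ∈ (augIdeal p) ^ N := z.2
  obtain ⟨y, hy, r, hr, hyr⟩ := Submodule.mem_sup.mp (pow_le_span N z.1 hz)
  rw [Submodule.restrictScalars_mem] at hr
  obtain ⟨α, hα, hθα⟩ := Submodule.mem_map.mp hy
  rw [AlgHom.toLinearMap_apply] at hθα
  refine ⟨⟨α, hα⟩, ?_⟩
  rw [fL_apply, Submodule.Quotient.eq, Submodule.mem_comap]
  have : theta p α - z.1 = -r := by rw [hθα, ← hyr]; abel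
  simpa [this] using neg_mem hr

end Magnus

/-- **Magnus: the associated graded of the group algebra of a free group is a free
associative algebra.**  There is an isomorphism of graded `ℂ`-algebras
`ℂ⟨x₁, …, x_p⟩ ≅ gr ℂ[F] = ⊕ₙ Iⁿ/Iⁿ⁺¹` sending `xᵢ` to the class of `γᵢ − 1`:
a family of degreewise `ℂ`-linear equivalences which is unital, multiplicative
(with respect to the multiplication induced by that of `ℂ[F]` on graded pieces),
and sends each generator `xᵢ` (of word-length degree 1) to `[γᵢ − 1] ∈ I/I²`. -/
theorem freeAlgebra_iso_associatedGraded (p : ℕ) :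
    ∃ e : ∀ n : ℕ, ↥(genSpan p ^ n) ≃ₗ[ℂ] grPiece p n,
      -- `e` is unital
      (e 0 ⟨1, by rw [Submodule.pow_zero]; exact Submodule.one_le.mp le_rfl⟩
        = Submodule.Quotient.mk ⟨1, by
            rw [Submodule.restrictScalars_mem, Submodule.pow_zero]
            exact Submodule.one_le.mp le_rfl⟩) ∧
      -- `e` sends the generator `xᵢ` to the class of `γᵢ − 1`
      (∀ i : Fin p,
        e 1 ⟨FreeAlgebra.ι ℂ i, by
            rw [Submodule.pow_one]; exact Submodule.subset_span ⟨i, rfl⟩⟩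
          = Submodule.Quotient.mk ⟨γ p i - 1, by
            rw [Submodule.restrictScalars_mem, Submodule.pow_one]
            exact γ_sub_one_mem p i⟩) ∧
      -- `e` is multiplicative: if `u ∈ Iᵐ` represents `e m x` and `v ∈ Iⁿ` represents
      -- `e n y`, then `[u·v] ∈ Iᵐ⁺ⁿ/Iᵐ⁺ⁿ⁺¹` represents `e (m+n) (x·y)`
      (∀ (m n : ℕ) (x : ↥(genSpan p ^ m)) (y : ↥(genSpan p ^ n))
        (u : ↥(Submodule.restrictScalars ℂ ((augIdeal p) ^ m)))
        (v : ↥(Submodule.restrictScalars ℂ ((augIdeal p) ^ n))),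
        e m x = Submodule.Quotient.mk u →
        e n y = Submodule.Quotient.mk v →
        e (m + n) ⟨(x : FreeAlgebra ℂ (Fin p)) * (y : FreeAlgebra ℂ (Fin p)),
            by rw [pow_add]; exact Submodule.mul_mem_mul x.2 y.2⟩
          = Submodule.Quotient.mk ⟨(u : FreeGroupAlgebra p) * (v : FreeGroupAlgebra p),
            by rw [Submodule.restrictScalars_mem]
               exact augIdeal_pow_mul_mem p m n u v u.2 v.2⟩) := by
  refine ⟨fun n => LinearEquiv.ofBijective (Magnus.fL p n)
    (id ⟨Magnus.fL_injective n, Magnus.fL_surjective n⟩ : Function.Bijective (Magnus.fL p n)),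
    ?_, ?_, ?_⟩
  · rw [LinearEquiv.ofBijective_apply, Magnus.fL_apply]
    exact congrArg _ (Subtype.ext (map_one (Magnus.theta p)))
  · intro i
    rw [LinearEquiv.ofBijective_apply, Magnus.fL_apply]
    exact congrArg _ (Subtype.ext (Magnus.theta_ι p i))
  · intro m n x y u v hx hy
    rw [LinearEquiv.ofBijective_apply, Magnus.fL_apply, Submodule.Quotient.eq,
      Submodule.mem_comap] at hx hy
    have hxu : Magnus.theta p x.1 - u.1 ∈ (augIdeal p) ^ (m + 1) := by simpa using hx
    have hyv : Magnus.theta p y.1 - v.1 ∈ (augIdeal p) ^ (n + 1) := by simpa using hy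
    have key : Magnus.theta p x.1 * Magnus.theta p y.1 - u.1 * v.1
        = (Magnus.theta p x.1 - u.1) * Magnus.theta p y.1
          + u.1 * (Magnus.theta p y.1 - v.1) := by
      noncomm_ring
    have t1 := augIdeal_pow_mul_mem p (m + 1) n _ _ hxu (Magnus.theta_mem_pow n y.1 y.2)
    have ht1 : m + 1 + n = m + n + 1 := by omega
    rw [ht1] at t1
    have t2 : u.1 * (Magnus.theta p y.1 - v.1) ∈ (augIdeal p) ^ (m + n + 1) :=
      augIdeal_pow_mul_mem p m (n + 1) _ _ u.2 hyv
    rw [LinearEquiv.ofBijective_apply, Magnus.fL_apply, Submodule.Quotient.eq,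
      Submodule.mem_comap]
    simpa [key] using add_mem t1 t2
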